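/- arXiv:math/9308218 — 3 statements merged into one kernel-verified Lean document; each statement's English description precedes it below -/
import Mathlib

section
/- Let S ⊆ lim(ω₁) and let T be a tree that is S-properly pruned in countable products. Let C = {F_s : s ∈ 2^{<ω}} ⊆ T^ω be a separated and uniformly cofinal Cantor tree in (T↾δ)^ω for some δ ∈ S. Then there are uncountably many f ∈ 2^ω such that for every i in ⋃_{n∈ω} supt(F_{f↾n}), the union ⋃_{n∈ω} F_{f↾n}(i) belongs to T_δ. -/
open Set

/-- A (partial) node of the tree `2^{<ω₁}`: a set of ordinal–bit pairs,
    thought of as the graph of a partial function from ω₁ to `Bool`. -/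
abbrev PNode : Type 1 := Set (Ordinal × Bool)

/-- The first uncountable ordinal ω₁. -/
noncomputable def omega1 : Ordinal := (Cardinal.aleph 1).ord

/-- `s` is (the graph of) a partial function. -/
def IsFunl (s : PNode) : Prop :=
  ∀ ⦃o : Ordinal⦄ ⦃b b' : Bool⦄, (o, b) ∈ s → (o, b') ∈ s → b = b'

/-- Domain of a partial node. -/
def ndom (s : PNode) : Set Ordinal := {o | ∃ b, (o, b) ∈ s}

/-- An element of `2^{<ω₁}`: a function from a countable ordinal to `Bool`. -/
def IsNode (s : PNode) : Prop :=
  IsFunl s ∧ ∃ δ : Ordinal, δ < omega1 ∧ ndom s = Set.Iio δ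

/-- Height (= length = domain) of a node. -/
noncomputable def ht (s : PNode) : Ordinal := sInf {δ : Ordinal | ndom s = Set.Iio δ}

/-- Two nodes are compatible iff their union is (the graph of) a function,
    i.e. they have a common extension in `2^{<ω₁}`. -/
def Compat (s t : PNode) : Prop := IsFunl (s ∪ t)

/-- Restriction of a node below `β`. -/
def restrictNode (s : PNode) (β : Ordinal) : PNode := {p ∈ s | p.1 < β}

/-- A tree: a set of nodes of `2^{<ω₁}` containing the root `∅` and closed
    under restriction (initial segments), ordered by inclusion. -/
def IsTree (T : Set PNode) : Prop :=
  (∀ t ∈ T, IsNode t) ∧ (∅ : PNode) ∈ T ∧ ∀ t ∈ T, ∀ β : Ordinal, restrictNode t β ∈ T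

/-- The δ-th level `T_δ` of a tree. -/
def level (T : Set PNode) (δ : Ordinal) : Set PNode := {t ∈ T | ndom t = Set.Iio δ}

/-- `T↾δ`, the part of the tree of height `< δ`. -/
def restrictTree (T : Set PNode) (δ : Ordinal) : Set PNode := {t ∈ T | ht t < δ}

/-- A branch: a linearly ordered subset meeting every nonempty level. -/
def IsBranch (B T : Set PNode) : Prop :=
  B ⊆ T ∧ IsChain (· ⊆ ·) B ∧
    ∀ δ : Ordinal, (level T δ).Nonempty → (B ∩ level T δ).Nonempty

/-- An ω₁-tree: cardinality ω₁ and height ω₁. -/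
def IsOmega1Tree (T : Set PNode) : Prop :=
  IsTree T ∧ Cardinal.mk T = Cardinal.aleph 1 ∧ ∀ δ < omega1, (level T δ).Nonempty

/-- A normal tree: every node has at least two immediate successors and
    extensions to every higher level below ω₁. -/
def IsNormalTree (T : Set PNode) : Prop :=
  (∀ t ∈ T, ∃ s₁ ∈ T, ∃ s₂ ∈ T, t ⊆ s₁ ∧ t ⊆ s₂ ∧ s₁ ≠ s₂ ∧
      ndom s₁ = Set.Iio (ht t + 1) ∧ ndom s₂ = Set.Iio (ht t + 1)) ∧
  (∀ t ∈ T, ∀ δ : Ordinal, ht t < δ → δ < omega1 → ∃ t' ∈ level T δ, t ⊆ t')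

/-- Support of a tuple `F ∈ T^I`. -/
def supt {I : Type*} (F : I → PNode) : Set I := {i | F i ≠ ∅}

/-- `F ∈ T^I` (every coordinate a node of `T`; `∅` is the root of `T`). -/
def Tuple {I : Type*} (T : Set PNode) (F : I → PNode) : Prop := ∀ i, F i ∈ T

/-- The pointwise order `F ≼ G` on `T^I`. -/
def Tle {I : Type*} (F G : I → PNode) : Prop := ∀ i, F i ⊆ G i

/-- `f↾n` for `f ∈ 2^ω`: the first `n` values of `f`, as an element of `2^{<ω}`. -/
def restr (f : ℕ → Bool) (n : ℕ) : List Bool := List.ofFn fun k : Fin n => f k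

/-- Incomparability in `2^{<ω}`. -/
def ListIncomp (s t : List Bool) : Prop := ¬ s <+: t ∧ ¬ t <+: s

/-- `F` and `G` are completely incompatible. -/
def CompIncompat {I J : Type*} (F : I → PNode) (G : J → PNode) : Prop :=
  ∀ i ∈ supt F, ∀ j ∈ supt G, ¬ Compat (F i) (G j)

/-- A Cantor tree `{F_s : s ∈ 2^{<ω}}` of tuples: `s ⊆ t` iff `F_s ≼ F_t`. -/
def IsCantorSystem {I : Type*} (F : List Bool → I → PNode) : Prop :=
  ∀ s t : List Bool, (s <+: t ↔ Tle (F s) (F t))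

/-- Separated: incomparable indices yield completely incompatible tuples. -/
def Separated {I : Type*} (F : List Bool → I → PNode) : Prop :=
  ∀ s t : List Bool, ListIncomp s t → CompIncompat (F s) (F t)

/-- `F` is uniform at `δ`: every coordinate in the support has height `δ`. -/
def UniformAt {I : Type*} (F : I → PNode) (δ : Ordinal) : Prop :=
  ∀ i ∈ supt F, ndom (F i) = Set.Iio δ

/-- The Cantor tree `{F_s}` is uniformly cofinal in `(T↾δ)^I`. -/
def UnifCofinal {I : Type*} (F : List Bool → I → PNode) (δ : Ordinal) : Prop :=
  (∀ s : List Bool, ∃ δs < δ, UniformAt (F s) δs) ∧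
  ∀ i ∈ ⋃ s : List Bool, supt (F s), ∀ f : ℕ → Bool,
    (∀ n, i ∈ supt (F (restr f n))) → ∀ β < δ, ∃ n, β ≤ ht (F (restr f n) i)

/-- `T` is properly pruned in countable products at level `δ`. -/
def PrunedInProductsAt (T : Set PNode) (δ : Ordinal) : Prop :=
  ∀ F : List Bool → ℕ → PNode, (∀ s, Tuple T (F s)) → IsCantorSystem F →
    Separated F → UnifCofinal F δ →
    ∃ f g : ℕ → Bool,
      (∀ i ∈ ⋃ n : ℕ, supt (F (restr f n)), (⋃ n : ℕ, F (restr f n) i) ∈ level T δ) ∧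
      (∀ i ∈ ⋃ n : ℕ, supt (F (restr g n)), (⋃ n : ℕ, F (restr g n) i) ∉ level T δ)

/-- `T` is complete at level `δ`: every branch of `T↾δ` has its union in `T_δ`. -/
def CompleteAt (T : Set PNode) (δ : Ordinal) : Prop :=
  ∀ B : Set PNode, IsBranch B (restrictTree T δ) → ⋃₀ B ∈ level T δ

/-- `T` is `S`-properly pruned in countable products. -/
def SPrunedInProducts (T : Set PNode) (S : Set Ordinal) : Prop :=
  ∀ δ < omega1, Order.IsSuccLimit δ →
    (δ ∉ S → CompleteAt T δ) ∧ (δ ∈ S → PrunedInProductsAt T δ)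

/-- A Cantor subtree `{c_s : s ∈ 2^{<ω}}` of `T`. -/
def IsCantorSubtree (T : Set PNode) (c : List Bool → PNode) : Prop :=
  (∀ s, c s ∈ T) ∧ ∀ s t : List Bool, s <+: t ↔ c s ⊆ c t

/-- A Cantor subtree of `T` is cofinal in `T↾δ`. -/
def CofinalIn (c : List Bool → PNode) (δ : Ordinal) : Prop :=
  ∀ f : ℕ → Bool, ∀ β < δ, ∃ n : ℕ, β ≤ ht (c (restr f n))

/-- `T` is properly pruned at level `δ`. -/
def PrunedAt (T : Set PNode) (δ : Ordinal) : Prop :=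
  ∀ c : List Bool → PNode, IsCantorSubtree T c → CofinalIn c δ →
    ∃ f g : ℕ → Bool,
      (⋃ n : ℕ, c (restr f n)) ∈ level T δ ∧ (⋃ n : ℕ, c (restr g n)) ∉ level T δ

/-- `T` is `S`-properly pruned. -/
def SPruned (T : Set PNode) (S : Set Ordinal) : Prop :=
  ∀ δ < omega1, Order.IsSuccLimit δ → (δ ∉ S → CompleteAt T δ) ∧ (δ ∈ S → PrunedAt T δ)

/-- The forcing poset `ℙ(T, I, ω₁)`: members of `T^I` with countable support. -/
def Cond (T : Set PNode) (I : Type*) :=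
  {F : I → PNode // (∀ i, F i ∈ T) ∧ (supt F).Countable}

/-- The order of `ℙ(T, I, ω₁)`: `p ≤ q` iff `q ≼ p` pointwise. -/
def condLE {T : Set PNode} {I : Type*} (p q : Cond T I) : Prop := ∀ i, q.1 i ⊆ p.1 i

lemma prefix_of_le_getElem {l₁ l₂ : List Bool} (hl : l₁.length ≤ l₂.length)
    (h : ∀ k (hk : k < l₁.length), l₁[k] = l₂[k]'(hk.trans_le hl)) : l₁ <+: l₂ := by
  rw [List.prefix_iff_eq_take]
  apply List.ext_getElem
  · simp [Nat.min_eq_left hl]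
  · intro i h1 h2
    rw [List.getElem_take]
    exact h i h1

def dbit (a : ℕ → ℕ → Bool) (k : ℕ) : Bool := !(a k (2*k+1))

def ee (a : ℕ → ℕ → Bool) (s : List Bool) : List Bool :=
  List.ofFn fun j : Fin (2 * s.length) =>
    if (j : ℕ) % 2 = 0 then s.getD ((j : ℕ)/2) false else dbit a ((j : ℕ)/2)

def gg (a : ℕ → ℕ → Bool) (f : ℕ → Bool) (j : ℕ) : Bool :=
  if j % 2 = 0 then f (j/2) else dbit a (j/2)

lemma ee_length (a : ℕ → ℕ → Bool) (s : List Bool) : (ee a s).length = 2 * s.length :=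
  List.length_ofFn

lemma ee_getElem (a : ℕ → ℕ → Bool) (s : List Bool) (j : ℕ) (h : j < (ee a s).length) :
    (ee a s)[j] = if j % 2 = 0 then s.getD (j/2) false else dbit a (j/2) := by
  simp [ee, List.getElem_ofFn]

lemma restr_length (f : ℕ → Bool) (n : ℕ) : (restr f n).length = n := List.length_ofFn

lemma restr_getElem (f : ℕ → Bool) (n k : ℕ) (h : k < (restr f n).length) :
    (restr f n)[k] = f k := by
  simp [restr, List.getElem_ofFn]

lemma restr_prefix (f : ℕ → Bool) {n m : ℕ} (h : n ≤ m) : restr f n <+: restr f m := by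
  apply prefix_of_le_getElem (by rw [restr_length, restr_length]; omega)
  intro k hk
  rw [restr_getElem, restr_getElem]

lemma ee_prefix_iff (a : ℕ → ℕ → Bool) (s t : List Bool) : ee a s <+: ee a t ↔ s <+: t := by
  constructor
  · intro h
    have hlen : s.length ≤ t.length := by
      have := h.length_le; rw [ee_length, ee_length] at this; omega
    apply prefix_of_le_getElem hlen
    intro k hk
    have h2k : 2*k < (ee a s).length := by rw [ee_length]; omega
    have h2k' : 2*k < (ee a t).length := by rw [ee_length]; omega
    have heq := h.getElem h2k
    rw [ee_getElem a s _ h2k, ee_getElem a t _ h2k'] at heq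
    have hm : (2*k) % 2 = 0 := by omega
    have hd : (2*k) / 2 = k := by omega
    rw [if_pos hm, if_pos hm, hd] at heq
    rwa [List.getD_eq_getElem _ _ hk, List.getD_eq_getElem _ _ (hk.trans_le hlen)] at heq
  · intro h
    have hlen : (ee a s).length ≤ (ee a t).length := by
      rw [ee_length, ee_length]; have := h.length_le; omega
    apply prefix_of_le_getElem hlen
    intro j hj
    have hj' : j < (ee a t).length := hj.trans_le hlen
    rw [ee_getElem a s _ hj, ee_getElem a t _ hj']
    split_ifs with hcond
    · have hjl : j / 2 < s.length := by rw [ee_length] at hj; omega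
      rw [List.getD_eq_getElem _ _ hjl,
        List.getD_eq_getElem _ _ (hjl.trans_le h.length_le), h.getElem hjl]
    · rfl

lemma ee_nil (a : ℕ → ℕ → Bool) : ee a [] = [] := by
  simp [ee]

lemma restr_zero (f : ℕ → Bool) : restr f 0 = [] := by
  simp [restr]

lemma ee_restr (a : ℕ → ℕ → Bool) (f : ℕ → Bool) (n : ℕ) :
    ee a (restr f n) = restr (gg a f) (2*n) := by
  apply List.ext_getElem
  · rw [ee_length, restr_length, restr_length]
  · intro j h1 h2
    rw [ee_getElem _ _ _ h1, restr_getElem _ _ _ h2]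
    have hjn : j < 2*n := by rw [ee_length, restr_length] at h1; omega
    unfold gg
    split_ifs with hcond
    · have hjl : j/2 < (restr f n).length := by rw [restr_length]; omega
      rw [List.getD_eq_getElem _ _ hjl, restr_getElem _ _ _ hjl]
    · rfl

lemma ht_eq {s : PNode} {α : Ordinal} (h : ndom s = Set.Iio α) : ht s = α := by
  have hset : {δ : Ordinal | ndom s = Set.Iio δ} = {α} := by
    ext β
    simp only [Set.mem_setOf_eq, Set.mem_singleton_iff, h]
    constructor
    · intro hb
      apply le_antisymm
      · by_contra hc
        push_neg at hc
        have : α ∈ Set.Iio α := hb.symm ▸ (Set.mem_Iio.mpr hc)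
        exact lt_irrefl α this
      · by_contra hc
        push_neg at hc
        have : β ∈ Set.Iio β := hb ▸ (Set.mem_Iio.mpr hc)
        exact lt_irrefl β this
    · rintro rfl; rfl
  rw [ht, hset, csInf_singleton]

lemma ht_mono {T : Set PNode} (hT : IsTree T) {s t : PNode} (hs : s ∈ T) (htt : t ∈ T)
    (hsub : s ⊆ t) : ht s ≤ ht t := by
  obtain ⟨_, α, _, hα⟩ := hT.1 s hs
  obtain ⟨_, β, _, hβ⟩ := hT.1 t htt
  rw [ht_eq hα, ht_eq hβ]
  by_contra hc
  push_neg at hc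
  have h1 : β ∈ ndom s := by rw [hα]; exact hc
  obtain ⟨b, hb⟩ := h1
  have h2 : β ∈ ndom t := ⟨b, hsub hb⟩
  rw [hβ] at h2
  exact lt_irrefl β h2

/-- **Lemma 4.** Let `T` be `S`-properly pruned in countable products and let
`C = {F_s : s ∈ 2^{<ω}} ⊆ T^ω` be a separated, uniformly cofinal Cantor tree in
`(T↾δ)^ω` for some `δ ∈ S`. Then there are uncountably many `f ∈ 2^ω` such that all
the coordinatewise unions `⋃ₙ F_{f↾n}(i)` (for `i` in the union of supports) lie
in `T_δ`. -/
theorem uncountably_many_branches_land_in_level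
    (T : Set PNode) (hT : IsTree T) (S : Set Ordinal)
    (hPr : SPrunedInProducts T S)
    (δ : Ordinal) (hδS : δ ∈ S) (hδ : δ < omega1) (hlim : Order.IsSuccLimit δ)
    (F : List Bool → ℕ → PNode) (hTup : ∀ s, Tuple T (F s))
    (hCantor : IsCantorSystem F) (hSep : Separated F) (hCof : UnifCofinal F δ) :
    ¬ Set.Countable {f : ℕ → Bool |
        ∀ i ∈ ⋃ n : ℕ, supt (F (restr f n)),
          (⋃ n : ℕ, F (restr f n) i) ∈ level T δ} := by
  intro hC
  set A := {f : ℕ → Bool |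
        ∀ i ∈ ⋃ n : ℕ, supt (F (restr f n)),
          (⋃ n : ℕ, F (restr f n) i) ∈ level T δ} with hA
  have hC' : (insert (fun _ => false) A).Countable := hC.insert _
  obtain ⟨a, ha⟩ := hC'.exists_eq_range (Set.insert_nonempty _ _)
  have hcov : ∀ f ∈ A, ∃ k, a k = f := by
    intro f hf
    have : f ∈ Set.range a := ha ▸ Set.mem_insert_of_mem _ hf
    exact this
  set F' : List Bool → ℕ → PNode := fun s => F (ee a s) with hF'
  have hCantor' : IsCantorSystem F' := fun s t =>
    (ee_prefix_iff a s t).symm.trans (hCantor (ee a s) (ee a t))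
  have hSep' : Separated F' := fun s t hst =>
    hSep (ee a s) (ee a t)
      ⟨fun h => hst.1 ((ee_prefix_iff a s t).mp h),
       fun h => hst.2 ((ee_prefix_iff a t s).mp h)⟩
  -- key relation between F'-branches and F-branches
  have hkey : ∀ (f : ℕ → Bool) (n : ℕ), F' (restr f n) = F (restr (gg a f) (2*n)) := by
    intro f n
    show F (ee a (restr f n)) = _
    rw [ee_restr]
  have hsupt_mono : ∀ s t : List Bool, s <+: t → supt (F s) ⊆ supt (F t) := by
    intro s t hst i hi
    have hsub : F s i ⊆ F t i := (hCantor s t).mp hst i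
    simp only [supt, Set.mem_setOf_eq] at hi ⊢
    intro hcon
    exact hi (Set.subset_empty_iff.mp (hcon ▸ hsub))
  have hCof' : UnifCofinal F' δ := by
    refine ⟨fun s => hCof.1 (ee a s), ?_⟩
    intro i _ f hf β hβ
    have h0 : i ∈ supt (F ([] : List Bool)) := by
      have := hf 0
      rwa [show F' (restr f 0) = F [] by rw [restr_zero]; show F (ee a []) = _; rw [ee_nil]]
        at this
    have hsupp : ∀ m, i ∈ supt (F (restr (gg a f) m)) := fun m =>
      hsupt_mono _ _ List.nil_prefix h0
    have hiU : i ∈ ⋃ s : List Bool, supt (F s) := Set.mem_iUnion.mpr ⟨[], h0⟩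
    obtain ⟨m, hm⟩ := hCof.2 i hiU (gg a f) hsupp β hβ
    refine ⟨m, ?_⟩
    rw [hkey f m]
    have hpre : restr (gg a f) m <+: restr (gg a f) (2*m) := restr_prefix _ (by omega)
    exact hm.trans (ht_mono hT (hTup _ i) (hTup _ i) ((hCantor _ _).mp hpre i))
  obtain ⟨f, g2, hf, -⟩ :=
    (hPr δ hδ hlim).2 hδS F' (fun s => hTup (ee a s)) hCantor' hSep' hCof'
  set g : ℕ → Bool := gg a f with hg
  have hmono2 : ∀ m : ℕ, restr g m <+: restr g (2*m) := fun m => restr_prefix _ (by omega)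
  have hsupteq : (⋃ n : ℕ, supt (F (restr g n))) = ⋃ n : ℕ, supt (F' (restr f n)) := by
    apply Set.Subset.antisymm
    · intro i hi
      obtain ⟨m, hm⟩ := Set.mem_iUnion.mp hi
      refine Set.mem_iUnion.mpr ⟨m, ?_⟩
      rw [hkey f m]
      exact hsupt_mono _ _ (hmono2 m) hm
    · intro i hi
      obtain ⟨m, hm⟩ := Set.mem_iUnion.mp hi
      rw [hkey f m] at hm
      exact Set.mem_iUnion.mpr ⟨2*m, hm⟩
  have hUeq : ∀ i, (⋃ n : ℕ, F (restr g n) i) = ⋃ n : ℕ, F' (restr f n) i := by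
    intro i
    apply Set.Subset.antisymm
    · refine Set.iUnion_subset fun m => ?_
      have : F (restr g m) i ⊆ F (restr g (2*m)) i := (hCantor _ _).mp (hmono2 m) i
      rw [← hkey f m] at this
      exact this.trans (Set.subset_iUnion (fun n => F' (restr f n) i) m)
    · refine Set.iUnion_subset fun m => ?_
      rw [hkey f m]
      exact Set.subset_iUnion (fun n => F (restr g n) i) (2*m)
  have hgA : g ∈ A := by
    intro i hi
    rw [hUeq i]
    exact hf i (hsupteq ▸ hi)
  obtain ⟨k, hk⟩ := hcov g hgA
  have h1 : g (2*k+1) = dbit a k := by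
    have hm : (2*k+1) % 2 = 1 := by omega
    have hd : (2*k+1) / 2 = k := by omega
    show gg a f (2*k+1) = dbit a k
    unfold gg
    rw [hd, if_neg (by omega)]
  rw [← hk] at h1
  unfold dbit at h1
  simp at h1
end

section
/- In M[G₁][G₂] as in the Jech–Kunen model (CH holds, T is a normal ω₁-tree which is lim(ω₁)-properly pruned, and ℙ₃ = Fn(λ, 2, ω₁) is ω₁-closed there), forcing with ℙ₃ adds no new branches to T: if G₃ is ℙ₃-generic over M[G₁][G₂], then B(T) computed in M[G₁][G₂][G₃] equals B(T) computed in M[G₁][G₂]. -/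
open Set

/-! Abstract forcing posets. `le p q` means "`p` extends (is stronger than) `q`". -/

section Poset

variable {P : Type*} (le : P → P → Prop)

/-- `D` is dense: every condition has an extension in `D`. -/
def DenseBelow (D : Set P) : Prop := ∀ p : P, ∃ d ∈ D, le d p

/-- `D` is open: downward closed under the forcing order. -/
def OpenBelow (D : Set P) : Prop := ∀ p d, d ∈ D → le p d → p ∈ D

/-- `P` is ω₁-Baire: countable intersections of dense open sets are dense. -/
def Omega1Baire : Prop :=
  ∀ D : ℕ → Set P, (∀ n, DenseBelow le (D n) ∧ OpenBelow le (D n)) →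
    DenseBelow le (⋂ n, D n)

/-- `P` is ω₁-closed: every countable descending chain has a lower bound. -/
def Omega1Closed : Prop :=
  ∀ c : ℕ → P, (∀ n, le (c (n + 1)) (c n)) → ∃ q : P, ∀ n, le q (c n)

end Poset
section Helpers

lemma isFunl_mono {s t : PNode} (h : s ⊆ t) (htf : IsFunl t) : IsFunl s :=
  fun _ _ _ h1 h2 => htf (h h1) (h h2)

lemma compat_comm {s t : PNode} (h : Compat s t) : Compat t s := by
  unfold Compat at *; rwa [Set.union_comm]

lemma not_compat_mono {s s' t t' : PNode} (h : ¬ Compat s t) (hs : s ⊆ s') (ht : t ⊆ t') :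
    ¬ Compat s' t' := fun hc => h (isFunl_mono (Set.union_subset_union hs ht) hc)

lemma subset_of_compat_ndom {s t : PNode} (hc : Compat s t) (hd : ndom s ⊆ ndom t) : s ⊆ t := by
  rintro ⟨o, b⟩ hob
  obtain ⟨b', hb'⟩ := hd ⟨b, hob⟩
  have : b = b' := hc (Set.mem_union_left _ hob) (Set.mem_union_right _ hb')
  rwa [this]

lemma not_subset_of_not_compat {s t : PNode} (h : ¬ Compat s t) (htf : IsFunl t) : ¬ s ⊆ t :=
  fun hs => h (isFunl_mono (Set.union_subset hs subset_rfl) htf)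

lemma ndom_mono {s t : PNode} (h : s ⊆ t) : ndom s ⊆ ndom t :=
  fun _ ⟨b, hb⟩ => ⟨b, h hb⟩

lemma Iio_ord_inj {a b : Ordinal} (h : Set.Iio a = Set.Iio b) : a = b := by
  by_contra hne
  rcases lt_or_gt_of_ne hne with h1 | h1
  · exact absurd (h ▸ (Set.mem_Iio.2 h1) : a ∈ Set.Iio a) (lt_irrefl a)
  · exact absurd (h.symm ▸ (Set.mem_Iio.2 h1) : b ∈ Set.Iio b) (lt_irrefl b)

lemma ht_eq_of_ndom {s : PNode} {δ : Ordinal} (h : ndom s = Set.Iio δ) : ht s = δ := by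
  have : {γ : Ordinal | ndom s = Set.Iio γ} = {δ} := by
    ext γ
    simp only [Set.mem_setOf_eq, Set.mem_singleton_iff]
    constructor
    · intro hγ; exact Iio_ord_inj (hγ.symm.trans h)
    · rintro rfl; exact h
  rw [ht, this, csInf_singleton]

lemma omega1_pos : (0 : Ordinal) < omega1 := by
  rw [omega1, ← Cardinal.ord_zero]
  exact Cardinal.ord_lt_ord.2 (Cardinal.aleph_pos 1)

lemma succ_lt_omega1 {a : Ordinal} (h : a < omega1) : a + 1 < omega1 := by
  rw [← Order.succ_eq_add_one]
  exact (Cardinal.isSuccLimit_ord (Cardinal.aleph0_le_aleph 1)).succ_lt h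

lemma iSup_lt_omega1 {ι : Type} [Countable ι] (f : ι → Ordinal.{0}) (h : ∀ i, f i < omega1) :
    (⨆ i, f i) < omega1 := by
  rw [omega1] at h ⊢
  exact Cardinal.iSup_lt_ord_lift_of_isRegular Cardinal.isRegular_aleph_one
    (by rw [Cardinal.lift_id]; exact Cardinal.mk_le_aleph0.trans_lt Cardinal.aleph0_lt_aleph_one) h

lemma restr_succ (f : ℕ → Bool) (n : ℕ) : restr f (n + 1) = restr f n ++ [f n] := by
  rw [restr, List.ofFn_succ', List.concat_eq_append]
  rfl

end Helpers

lemma depRecExists {α : ℕ → Sort*} (R : ∀ n, α n → α (n+1) → Prop) (a0 : α 0)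
    (h : ∀ n a, ∃ b, R n a b) :
    ∃ f : ∀ n, α n, ∀ n, R n (f n) (f (n+1)) :=
  ⟨fun n => Nat.rec a0 (fun n a => Classical.choose (h n a)) n,
   fun n => Classical.choose_spec (h n _)⟩

section Construction

variable {P : Type*}

/-- Stage `n` of the Cantor-tree construction: a condition and a node of the tree
for each element of `2^n`, together with the common height of the nodes. -/
abbrev Stage (P : Type*) (n : ℕ) : Type _ :=
  ((Fin n → Bool) → P) × ((Fin n → Bool) → PNode) × Ordinal

/-- Invariant of a single stage. -/
def StInv (le : P → P → Prop) (fm : P → PNode → Prop) (p : P) {n : ℕ} (x : Stage P n) : Prop :=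
  x.2.2 < omega1 ∧ ∀ v, le (x.1 v) p ∧ fm (x.1 v) (x.2.1 v) ∧ ndom (x.2.1 v) = Set.Iio x.2.2

/-- Relation between consecutive stages. -/
def StRel (le : P → P → Prop) (n : ℕ) (x : Stage P n) (y : Stage P (n + 1)) : Prop :=
  x.2.2 < y.2.2 ∧ ∀ v : Fin (n + 1) → Bool,
    le (y.1 v) (x.1 (v ∘ Fin.castSucc)) ∧
    x.2.1 (v ∘ Fin.castSucc) ⊆ y.2.1 v ∧
    ∀ w : Fin (n + 1) → Bool,
      v ∘ Fin.castSucc = w ∘ Fin.castSucc → v ≠ w → ¬ Compat (y.2.1 v) (y.2.1 w)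

end Construction

/-- **Claim 8.4 (second half).** In `M[G₁][G₂]`, where `T` is a normal ω₁-tree which is
`lim(ω₁)`-properly pruned and `ℙ₃ = Fn(λ, 2, ω₁)` is ω₁-closed, forcing with `ℙ₃` adds
no new branches to `T`.

Forcing-free formulation: a `ℙ₃`-name `ḃ` for a cofinal branch of `T` is represented
by the relation `fm p t` ("`p ⊩ ť ∈ ḃ`"), which takes values in `T`, is monotone,
forces a chain, and densely forces nodes of every countable height. The conclusion
"`ḃ` is not new" says that below every condition there is a condition `q` deciding the
branch: any two nodes forced by extensions of `q` are compatible, so the branch forced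
below `q` is a ground-model branch. -/
theorem omega1Closed_adds_no_new_branch_of_pruned_tree
    {P : Type*} (le : P → P → Prop)
    (hrefl : ∀ p, le p p) (htrans : ∀ p q r, le p q → le q r → le p r)
    (hclosed : Omega1Closed le)
    (T : Set PNode) (hT : IsOmega1Tree T) (hN : IsNormalTree T)
    (hPr : ∀ δ < omega1, Order.IsSuccLimit δ → PrunedAt T δ)
    (fm : P → PNode → Prop)
    (hval : ∀ p t, fm p t → t ∈ T)
    (hmono : ∀ p q t, le q p → fm p t → fm q t)
    (hchain : ∀ p t t', fm p t → fm p t' → Compat t t')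
    (htotal : ∀ p, ∀ δ < omega1, ∃ q, le q p ∧ ∃ t, fm q t ∧ ndom t = Set.Iio δ) :
    ∀ p : P, ∃ q, le q p ∧
      ∀ q₁ q₂ t₁ t₂, le q₁ q → le q₂ q → fm q₁ t₁ → fm q₂ t₂ → Compat t₁ t₂ := by
  intro p
  by_contra hcon
  push_neg at hcon
  -- every node of `T` is a partial function
  have hfunl : ∀ t ∈ T, IsFunl t := fun t ht => (hT.1.1 t ht).1
  -- base stage
  have base : ∃ x : Stage P 0, StInv le fm p x := by
    obtain ⟨q0, hq0, t0, hft0, hnd0⟩ := htotal p 0 omega1_pos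
    exact ⟨(fun _ => q0, fun _ => t0, 0), omega1_pos, fun v => ⟨hq0, hft0, hnd0⟩⟩
  -- step
  have hstep : ∀ (n : ℕ) (x : {x : Stage P n // StInv le fm p x}),
      ∃ y : {y : Stage P (n + 1) // StInv le fm p y}, StRel le n x.1 y.1 := by
    intro n x
    obtain ⟨⟨pp, tt, d⟩, hdlt, hx⟩ := x
    choose q1 q2 t1 t2 hq1 hq2 hf1 hf2 hic using
      fun v : Fin n → Bool => hcon (pp v) (hx v).1
    set Q : (Fin n → Bool) → Bool → P := fun v b => if b then q2 v else q1 v with hQ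
    set TT : (Fin n → Bool) → Bool → PNode := fun v b => if b then t2 v else t1 v with hTT
    have hQle : ∀ v b, le (Q v b) (pp v) := by
      intro v b; cases b
      · simpa [hQ] using hq1 v
      · simpa [hQ] using hq2 v
    have hQf : ∀ v b, fm (Q v b) (TT v b) := by
      intro v b; cases b
      · simpa [hQ, hTT] using hf1 v
      · simpa [hQ, hTT] using hf2 v
    have hnode : ∀ v b, IsNode (TT v b) := fun v b => hT.1.1 _ (hval _ _ (hQf v b))
    choose ε hεlt hεnd using fun z : (Fin n → Bool) × Bool => (hnode z.1 z.2).2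
    set γ : Ordinal := max (⨆ z : (Fin n → Bool) × Bool, ε z) d with hγdef
    have hγlt : γ < omega1 := max_lt (iSup_lt_omega1 _ hεlt) hdlt
    have hδ'lt : γ + 1 < omega1 := succ_lt_omega1 hγlt
    have hγsucc : γ < γ + 1 := by
      rw [Ordinal.add_one_eq_succ]; exact Order.lt_succ γ
    have hεle : ∀ z, ε z ≤ γ := fun z => le_trans (Ordinal.le_iSup ε z) (le_max_left _ _)
    have hdle : d < γ + 1 := lt_of_le_of_lt (le_max_right _ _) hγsucc
    choose r hrle u hfu hund using
      fun z : (Fin n → Bool) × Bool => htotal (Q z.1 z.2) (γ + 1) hδ'lt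
    -- key subset facts
    have hsubTT : ∀ z : (Fin n → Bool) × Bool, TT z.1 z.2 ⊆ u z := by
      intro z
      have hfmTT : fm (r z) (TT z.1 z.2) := hmono _ _ _ (hrle z) (hQf z.1 z.2)
      refine subset_of_compat_ndom (hchain (r z) _ _ hfmTT (hfu z)) ?_
      rw [hεnd z, hund z]
      exact Set.Iio_subset_Iio ((hεle z).trans hγsucc.le)
    have hrpp : ∀ z : (Fin n → Bool) × Bool, le (r z) (pp z.1) :=
      fun z => htrans _ _ _ (hrle z) (hQle z.1 z.2)
    have hsubtt : ∀ z : (Fin n → Bool) × Bool, tt z.1 ⊆ u z := by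
      intro z
      have hfmtt : fm (r z) (tt z.1) := hmono _ _ _ (hrpp z) (hx z.1).2.1
      refine subset_of_compat_ndom (hchain (r z) _ _ hfmtt (hfu z)) ?_
      rw [(hx z.1).2.2, hund z]
      exact Set.Iio_subset_Iio hdle.le
    have hicTT : ∀ (v' : Fin n → Bool) (b b' : Bool), b ≠ b' →
        ¬ Compat (TT v' b) (TT v' b') := by
      intro v' b b' hbb
      cases b <;> cases b'
      · exact absurd rfl hbb
      · simpa [hTT] using hic v'
      · simp only [hTT, if_pos, if_neg, Bool.false_eq_true, not_false_eq_true]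
        exact fun hc => hic v' (compat_comm hc)
      · exact absurd rfl hbb
    refine ⟨⟨(fun v => r (v ∘ Fin.castSucc, v (Fin.last n)),
              fun v => u (v ∘ Fin.castSucc, v (Fin.last n)), γ + 1),
            hδ'lt, fun v => ⟨htrans _ _ _ (hrpp (v ∘ Fin.castSucc, v (Fin.last n)))
                (hx (v ∘ Fin.castSucc)).1,
              hfu (v ∘ Fin.castSucc, v (Fin.last n)), hund (v ∘ Fin.castSucc, v (Fin.last n))⟩⟩,
           hdle, fun v => ⟨hrpp (v ∘ Fin.castSucc, v (Fin.last n)),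
             hsubtt (v ∘ Fin.castSucc, v (Fin.last n)), ?_⟩⟩
    intro w hvw hne
    have hb : v (Fin.last n) ≠ w (Fin.last n) := by
      intro hbe
      apply hne
      funext i
      refine Fin.lastCases ?_ ?_ i
      · exact hbe
      · intro j; exact congrFun hvw j
    have hgoal : ¬ Compat (u (v ∘ Fin.castSucc, v (Fin.last n)))
        (u (v ∘ Fin.castSucc, w (Fin.last n))) :=
      not_compat_mono (hicTT (v ∘ Fin.castSucc) _ _ hb)
        (hsubTT (v ∘ Fin.castSucc, v (Fin.last n)))
        (hsubTT (v ∘ Fin.castSucc, w (Fin.last n)))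
    have hpair : (v ∘ Fin.castSucc, w (Fin.last n)) = (w ∘ Fin.castSucc, w (Fin.last n)) := by
      rw [hvw]
    rw [hpair] at hgoal
    exact hgoal
  obtain ⟨A, hA⟩ := depRecExists (α := fun n => {x : Stage P n // StInv le fm p x})
    (fun n x y => StRel le n x.1 y.1) (Classical.choice (by
    obtain ⟨x, hx⟩ := base; exact ⟨⟨x, hx⟩⟩)) hstep
  -- notation
  set dN : ℕ → Ordinal := fun n => (A n).1.2.2 with hdN
  have hInv : ∀ n, StInv le fm p (A n).1 := fun n => (A n).2
  have hdlt : ∀ n, dN n < omega1 := fun n => (hInv n).1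
  have hdmono : StrictMono dN := strictMono_nat_of_lt_succ fun n => (hA n).1
  -- monotonicity along restrictions
  have key : ∀ (m n : ℕ) (h : n ≤ m) (v : Fin m → Bool),
      le ((A m).1.1 v) ((A n).1.1 (v ∘ Fin.castLE h)) ∧
      (A n).1.2.1 (v ∘ Fin.castLE h) ⊆ (A m).1.2.1 v := by
    intro m
    induction m with
    | zero =>
      intro n h v
      have h0 : n = 0 := Nat.le_zero.1 h
      subst h0
      have hv : v ∘ Fin.castLE h = v := funext fun i => congrArg v (Fin.ext rfl)
      rw [hv]
      exact ⟨hrefl _, subset_rfl⟩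
    | succ m ih =>
      intro n h v
      rcases eq_or_lt_of_le h with rfl | h'
      · have hv : v ∘ Fin.castLE h = v := funext fun i => congrArg v (Fin.ext rfl)
        rw [hv]
        exact ⟨hrefl _, subset_rfl⟩
      · have hn : n ≤ m := Nat.lt_succ_iff.1 h'
        obtain ⟨hle1, hsub1, -⟩ := (hA m).2 v
        obtain ⟨hle2, hsub2⟩ := ih n hn (v ∘ Fin.castSucc)
        have hcomp : (v ∘ Fin.castSucc) ∘ Fin.castLE hn = v ∘ Fin.castLE h :=
          funext fun i => congrArg v (Fin.ext rfl)
        rw [hcomp] at hle2 hsub2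
        exact ⟨htrans _ _ _ hle1 hle2, hsub2.trans hsub1⟩
  -- incompatibility of distinct same-length nodes
  have inc : ∀ (n : ℕ) (v w : Fin n → Bool), v ≠ w →
      ¬ Compat ((A n).1.2.1 v) ((A n).1.2.1 w) := by
    intro n
    induction n with
    | zero => exact fun v w hvw => absurd (funext fun i => i.elim0) hvw
    | succ n ih =>
      intro v w hvw
      by_cases hc : v ∘ Fin.castSucc = w ∘ Fin.castSucc
      · exact ((hA n).2 v).2.2 w hc hvw
      · exact not_compat_mono (ih _ _ hc) ((hA n).2 v).2.1 ((hA n).2 w).2.1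
  -- the Cantor subtree, indexed by lists
  set cS : List Bool → PNode := fun s => (A s.length).1.2.1 s.get with hcS
  set pS : List Bool → P := fun s => (A s.length).1.1 s.get with hpS
  have hfmS : ∀ s, fm (pS s) (cS s) := fun s => ((hInv s.length).2 _).2.1
  have hSlep : ∀ s, le (pS s) p := fun s => ((hInv s.length).2 _).1
  have hndS : ∀ s, ndom (cS s) = Set.Iio (dN s.length) := fun s => ((hInv s.length).2 _).2.2
  have hcT : ∀ s, cS s ∈ T := fun s => hval _ _ (hfmS s)
  -- cast lemma
  have hacast : ∀ {n m : ℕ} (h : n = m) (v : Fin n → Bool) (w : Fin m → Bool),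
      (∀ i : Fin n, v i = w (Fin.cast h i)) →
      (A n).1.2.1 v = (A m).1.2.1 w ∧ (A n).1.1 v = (A m).1.1 w := by
    intro n m h
    subst h
    intro v w hv
    have : v = w := funext fun i => hv i
    rw [this]
    exact ⟨rfl, rfl⟩
  -- prefix monotonicity for lists
  have hprefS : ∀ s t : List Bool, s <+: t → cS s ⊆ cS t ∧ le (pS t) (pS s) := by
    intro s t hpre
    have hlen : s.length ≤ t.length := hpre.length_le
    have hfun : s.get = t.get ∘ Fin.castLE hlen := by
      funext i
      simpa using hpre.getElem i.2
    obtain ⟨hle, hsub⟩ := key t.length s.length hlen t.get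
    simp only [hcS, hpS]
    rw [hfun]
    exact ⟨hsub, hle⟩
  -- same-length distinct lists are incompatible
  have hincL : ∀ s t : List Bool, s.length = t.length → s ≠ t → ¬ Compat (cS s) (cS t) := by
    intro s t hlen hne
    have h1 : (A s.length).1.2.1 (fun i => t.get (Fin.cast hlen i)) = (A t.length).1.2.1 t.get :=
      (hacast hlen (fun i => t.get (Fin.cast hlen i)) t.get (fun i => rfl)).1
    have h2 : s.get ≠ (fun i : Fin s.length => t.get (Fin.cast hlen i)) := by
      intro he
      apply hne
      apply List.ext_get hlen
      intro i h1i h2i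
      exact congrFun he ⟨i, h1i⟩
    simp only [hcS]
    rw [← h1]
    exact inc s.length _ _ h2
  -- cS is a Cantor subtree
  have hCantor : IsCantorSubtree T cS := by
    refine ⟨hcT, fun s t => ⟨fun hp => (hprefS s t hp).1, fun hsub => ?_⟩⟩
    by_contra hnp
    rcases le_or_gt s.length t.length with hlen | hlen
    · have hpre' : t.take s.length <+: t := List.take_prefix _ _
      have hlen' : s.length = (t.take s.length).length := by
        simp [List.length_take, Nat.min_eq_left hlen]
      have hne : s ≠ t.take s.length := fun he => hnp (he ▸ hpre')
      have hic : ¬ Compat (cS s) (cS (t.take s.length)) := hincL s _ hlen' hne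
      have hic2 : ¬ Compat (cS s) (cS t) :=
        not_compat_mono hic subset_rfl (hprefS _ t hpre').1
      exact not_subset_of_not_compat hic2 (hfunl _ (hcT t)) hsub
    · have h1 : ndom (cS s) ⊆ ndom (cS t) := ndom_mono hsub
      rw [hndS, hndS] at h1
      exact absurd (h1 (Set.mem_Iio.2 (hdmono hlen))) (by simp)
  -- the limit height
  set δ : Ordinal := ⨆ n, dN n with hδ
  have hδlt : δ < omega1 := iSup_lt_omega1 dN hdlt
  have hdNδ : ∀ n, dN n < δ := fun n => lt_of_lt_of_le (hdmono (Nat.lt_succ_self n))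
    (Ordinal.le_iSup dN (n + 1))
  have hexlt : ∀ a < δ, ∃ n, a < dN n := by
    intro a ha
    by_contra hno
    push_neg at hno
    exact absurd (Ordinal.iSup_le hno) (not_le.2 ha)
  have hlim : Order.IsSuccLimit δ := by
    rw [Ordinal.isSuccLimit_iff]
    constructor
    · exact fun h0 => absurd (h0 ▸ hdNδ 0) (by simp)
    · refine Order.isSuccPrelimit_of_succ_lt ?_
      intro a ha
      obtain ⟨n, hn⟩ := hexlt a ha
      exact lt_of_le_of_lt (Order.succ_le_of_lt hn) (hdNδ n)
  -- cofinality
  have hcof : CofinalIn cS δ := by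
    intro f β hβ
    obtain ⟨n, hn⟩ := hexlt β hβ
    refine ⟨n, ?_⟩
    have h1 : ht (cS (restr f n)) = dN (restr f n).length := ht_eq_of_ndom (hndS _)
    rw [h1, restr_length]
    exact hn.le
  -- apply pruning
  obtain ⟨f, g, hf, hg⟩ := hPr δ hδlt hlim cS hCantor hcof
  -- build the descending chain along g and derive the contradiction
  have hchainle : ∀ n, le (pS (restr g (n + 1))) (pS (restr g n)) :=
    fun n => (hprefS _ _ (restr_prefix g (Nat.le_succ n))).2
  obtain ⟨q, hq⟩ := hclosed (fun n => pS (restr g n)) hchainle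
  obtain ⟨r, hrq, t, hft, hndt⟩ := htotal q δ hδlt
  have htT : t ∈ T := hval _ _ hft
  have htf : IsFunl t := hfunl t htT
  have hfmr : ∀ n, fm r (cS (restr g n)) :=
    fun n => hmono _ _ _ (htrans _ _ _ hrq (hq n)) (hfmS _)
  have hsubn : ∀ n, cS (restr g n) ⊆ t := by
    intro n
    have hc : Compat (cS (restr g n)) t := hchain r _ _ (hfmr n) hft
    apply subset_of_compat_ndom hc
    rw [hndS, hndt, restr_length]
    exact Set.Iio_subset_Iio (hdNδ n).le
  have hUnion : (⋃ n : ℕ, cS (restr g n)) = t := by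
    apply Set.Subset.antisymm
    · exact Set.iUnion_subset hsubn
    · rintro ⟨o, b⟩ hob
      have ho : o < δ := by
        have : o ∈ ndom t := ⟨b, hob⟩
        rwa [hndt] at this
      obtain ⟨n, hn⟩ := hexlt o ho
      have : o ∈ ndom (cS (restr g n)) := by
        rw [hndS, restr_length]; exact hn
      obtain ⟨b', hb'⟩ := this
      have : b' = b := htf (hsubn n hb') hob
      exact Set.mem_iUnion.2 ⟨n, this ▸ hb'⟩
  exact hg (hUnion ▸ ⟨htT, hndt⟩)
end

section
/- Suppose ℙ and ℚ are forcing posets over M, ℙ is ω₁-Baire in M, and ℚ is ω₁-closed in M. Let G × H be ℙ × ℚ-generic over M. Then M^ω ∩ M[G × H] ⊆ M; i.e., the product forcing adds no new countable sequences of ground-model elements. -/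
open Set

/-- **Claim 8.1 (argument pattern).** If `ℙ` is ω₁-Baire in `M` and `ℚ` is ω₁-closed in
`M`, then forcing with `ℙ × ℚ` adds no new countable sequences of ground-model
elements: `M^ω ∩ M[G × H] ⊆ M`. Combinatorially, the product poset `ℙ × ℚ` is
ω₁-Baire (ω-distributive), which is exactly the statement that it adds no new
ω-sequences. -/
theorem product_baire_closed_no_new_sequences
    {P Q : Type*} (leP : P → P → Prop) (leQ : Q → Q → Prop)
    (hreflP : ∀ p, leP p p) (htransP : ∀ p q r, leP p q → leP q r → leP p r)
    (hreflQ : ∀ p, leQ p p) (htransQ : ∀ p q r, leQ p q → leQ q r → leQ p r)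
    (hP : Omega1Baire leP) (hQ : Omega1Closed leQ) :
    Omega1Baire (fun x y : P × Q => leP x.1 y.1 ∧ leQ x.2 y.2) := by
  classical
  intro D hD pq0
  obtain ⟨p0, q0⟩ := pq0
  -- a well-order on Q
  set r : Q → Q → Prop := WellOrderingRel with hr
  have hwf : WellFounded r := (IsWellFounded.wf : WellFounded (WellOrderingRel : Q → Q → Prop))
  have htri : ∀ a b : Q, r a b ∨ a = b ∨ r b a := fun a b =>
    trichotomous_of (WellOrderingRel : Q → Q → Prop) a b
  -- "p stably decides step k with value q, given previous value q'"
  set Stable : ℕ → P → Q → Q → Prop := fun k p q q' =>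
    leQ q q' ∧ (p, q) ∈ D k ∧
      ∀ p', leP p' p → ∀ x, leQ x q' → (p', x) ∈ D k → ¬ r x q with hStable
  -- stability is inherited by extensions
  have hDown : ∀ k p p' q q', leP p' p → Stable k p q q' → Stable k p' q q' := by
    intro k p p' q q' hpp ⟨h1, h2, h3⟩
    refine ⟨h1, (hD k).2 (p', q) (p, q) h2 ⟨hpp, hreflQ q⟩, ?_⟩
    intro p'' hp'' x hx hxD
    exact h3 p'' (htransP p'' p' p hp'' hpp) x hx hxD
  -- stable values are unique
  have hUniq : ∀ k p q x q', Stable k p q q' → Stable k p x q' → q = x := by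
    intro k p q x q' ⟨h1, h2, h3⟩ ⟨h1', h2', h3'⟩
    rcases htri q x with h | h | h
    · exact absurd h (h3' p (hreflP p) q h1 h2)
    · exact h
    · exact absurd h (h3 p (hreflP p) x h1' h2')
  -- existence: below any condition some extension stably decides step k
  have hEx : ∀ k p1 q', ∃ p q, leP p p1 ∧ Stable k p q q' := by
    intro k p1 q'
    set V : Set Q := {x | leQ x q' ∧ ∃ p, leP p p1 ∧ (p, x) ∈ D k} with hV
    obtain ⟨d, hdD, hdle⟩ := (hD k).1 (p1, q')
    have hVne : V.Nonempty := ⟨d.2, hdle.2, d.1, hdle.1, hdD⟩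
    set q : Q := hwf.min V hVne with hq
    have hqV : q ∈ V := hwf.min_mem V hVne
    obtain ⟨hqle, p, hp, hpD⟩ := hqV
    refine ⟨p, q, hp, hqle, hpD, ?_⟩
    intro p' hp' x hx hxD
    exact hwf.not_lt_min V ⟨hx, p', htransP p' p p1 hp' hp, hxD⟩
  -- the dense open sets in P
  set E : ℕ → Set P := fun n =>
    {p | ∃ c : ℕ → Q, c 0 = q0 ∧ ∀ k < n, Stable k p (c (k + 1)) (c k)} with hE
  have hEdo : ∀ n, DenseBelow leP (E n) ∧ OpenBelow leP (E n) := by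
    intro n
    constructor
    · -- density, by induction on n
      induction n with
      | zero => exact fun p => ⟨p, ⟨fun _ => q0, rfl, fun k hk => absurd hk (Nat.not_lt_zero k)⟩,
          hreflP p⟩
      | succ n ih =>
        intro p1
        obtain ⟨p, ⟨c, hc0, hcS⟩, hple⟩ := ih p1
        obtain ⟨p', q, hp'le, hSt⟩ := hEx n p (c n)
        refine ⟨p', ⟨Function.update c (n + 1) q, ?_, ?_⟩, htransP p' p p1 hp'le hple⟩
        · rw [Function.update_of_ne (by omega) _ _]; exact hc0
        · intro k hk
          rcases Nat.lt_succ_iff_lt_or_eq.mp hk with hk' | hk'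
          · rw [Function.update_of_ne (by omega) _ _, Function.update_of_ne (by omega) _ _]
            exact hDown k p p' _ _ hp'le (hcS k hk')
          · subst hk'
            rw [Function.update_self, Function.update_of_ne (by omega) _ _]
            exact hSt
    · -- openness
      intro p' p ⟨c, hc0, hcS⟩ hle
      exact ⟨c, hc0, fun k hk => hDown k p p' _ _ hle (hcS k hk)⟩
  -- apply ω₁-Baireness of P
  obtain ⟨pstar, hpmem, hple⟩ := hP E hEdo p0
  have hpE : ∀ n, pstar ∈ E n := fun n => Set.mem_iInter.mp hpmem n
  choose c hc0 hcS using hpE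
  -- decided values agree
  have agree : ∀ k, ∀ m n, k ≤ m → k ≤ n → c m k = c n k := by
    intro k
    induction k with
    | zero => intro m n _ _; rw [hc0 m, hc0 n]
    | succ k ih =>
      intro m n hm hn
      have h1 := hcS m k (by omega)
      have h2 := hcS n k (by omega)
      rw [ih m n (by omega) (by omega)] at h1
      exact hUniq k pstar _ _ _ h1 h2
  -- the decided descending chain
  set e : ℕ → Q := fun k => c (k + 1) k with he
  have he0 : e 0 = q0 := hc0 1
  have heS : ∀ k, Stable k pstar (e (k + 1)) (e k) := by
    intro k
    have h := hcS (k + 2) k (by omega)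
    rwa [agree (k + 1) (k + 2) (k + 2) (by omega) (by omega),
      agree k (k + 2) (k + 1) (by omega) (by omega)] at h
  have hdesc : ∀ k, leQ (e (k + 1)) (e k) := fun k => (heS k).1
  obtain ⟨qstar, hq⟩ := hQ e hdesc
  refine ⟨(pstar, qstar), Set.mem_iInter.mpr fun n => ?_, hple, ?_⟩
  · exact (hD n).2 (pstar, qstar) (pstar, e (n + 1)) (heS n).2.1 ⟨hreflP pstar, hq (n + 1)⟩
  · have := hq 0; rwa [he0] at this
end
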